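/- Let 0 < α < 1, let λ = (1−α)/(2α), and suppose the spectral radius order k = k(λ) is finite. Then for every d ≥ 2, N_α(d) ≥ ⌊k(d−1)/(k−1)⌋. -/

import Mathlib

open scoped RealInnerProductSpace

open Matrix

attribute [local instance] Classical.propDecidable

/-- The adjacency matrix of a finite simple graph, with real entries. -/
noncomputable def adjMat {V : Type*} [Fintype V] (G : SimpleGraph V) : Matrix V V ℝ :=
  Matrix.of fun a b => if G.Adj a b then 1 else 0

lemma adjMat_isHermitian {V : Type*} [Fintype V] (G : SimpleGraph V) :
    (adjMat G).IsHermitian := by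
  show (adjMat G)ᴴ = adjMat G
  ext i j
  simp only [adjMat, Matrix.conjTranspose_apply, Matrix.of_apply, star_trivial]
  rw [SimpleGraph.adj_comm]

/-- The `k`-th largest eigenvalue (`1`-indexed, counted with multiplicity) of the
adjacency matrix of a finite simple graph. -/
noncomputable def graphEigNth {V : Type*} [Fintype V] (G : SimpleGraph V) (k : ℕ) : ℝ :=
  ((Finset.univ.val.map (adjMat_isHermitian G).eigenvalues).sort (· ≤ ·)).getD
    (Fintype.card V - k) 0

/-- `maxEquiangularLines α d` is the maximum number of equiangular lines in `ℝ^d` with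
common angle `arccos α`: the supremum of all `n` for which there exist `n` unit vectors
in `ℝ^d` with pairwise inner products `±α`. -/
noncomputable def maxEquiangularLines (α : ℝ) (d : ℕ) : ℕ :=
  sSup {n : ℕ | ∃ v : Fin n → EuclideanSpace ℝ (Fin d),
    (∀ i, ‖v i‖ = 1) ∧ ∀ i j, i ≠ j → ⟪v i, v j⟫ = α ∨ ⟪v i, v j⟫ = -α}

/- ### Auxiliary lemmas -/

lemma spec_entry {n : Type*} [Fintype n] [DecidableEq n] (A : Matrix n n ℝ) (hA : A.IsHermitian)
    (j j' : n) :
    A j j' = ∑ i, hA.eigenvalues i * (hA.eigenvectorUnitary : Matrix n n ℝ) j i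
      * (hA.eigenvectorUnitary : Matrix n n ℝ) j' i := by
  conv_lhs => rw [hA.spectral_theorem, Unitary.conjStarAlgAut_apply]
  rw [Matrix.mul_apply]
  simp only [Matrix.mul_apply, Matrix.diagonal_apply, Function.comp, mul_ite, mul_zero,
    Finset.sum_ite_eq, Finset.mem_univ, if_true, Matrix.star_apply, star_trivial]
  refine Finset.sum_congr rfl fun i _ => ?_
  simp only [Finset.sum_ite_eq', Finset.mem_univ, if_true, RCLike.ofReal_real_eq_id, id_eq]
  ring

lemma star_mulvec_dot {n : Type*} [Fintype n] (U : Matrix n n ℝ) (x w : n → ℝ) :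
    (star U *ᵥ x) ⬝ᵥ w = x ⬝ᵥ (U *ᵥ w) := by
  rw [dotProduct_mulVec x U w]
  congr 1
  ext i
  simp [Matrix.vecMul, Matrix.mulVec, dotProduct, Matrix.star_apply, mul_comm]

lemma rayleigh {n : Type*} [Fintype n] [DecidableEq n] (A : Matrix n n ℝ) (hA : A.IsHermitian)
    (c : ℝ) (h : ∀ i, hA.eigenvalues i ≤ c) (x : n → ℝ) :
    x ⬝ᵥ (A *ᵥ x) ≤ c * (x ⬝ᵥ x) := by
  set U : Matrix n n ℝ := (hA.eigenvectorUnitary : Matrix n n ℝ) with hU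
  set z : n → ℝ := star U *ᵥ x with hz
  have hUU : U * star U = 1 := (Matrix.mem_unitaryGroup_iff).mp (hA.eigenvectorUnitary).2
  have hxz : x ⬝ᵥ x = z ⬝ᵥ z := by
    rw [hz, star_mulvec_dot, Matrix.mulVec_mulVec, hUU, Matrix.one_mulVec]
  have hAx : x ⬝ᵥ (A *ᵥ x) = ∑ i, hA.eigenvalues i * (z i * z i) := by
    conv_lhs => rw [hA.spectral_theorem, Unitary.conjStarAlgAut_apply]
    rw [Matrix.mul_assoc, ← Matrix.mulVec_mulVec, ← Matrix.mulVec_mulVec,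
      ← star_mulvec_dot, ← hz]
    simp only [dotProduct, Matrix.mulVec_diagonal, Function.comp,
      RCLike.ofReal_real_eq_id, id_eq]
    exact Finset.sum_congr rfl fun i _ => by ring
  rw [hAx, hxz, dotProduct, Finset.mul_sum]
  refine Finset.sum_le_sum fun i _ => ?_
  have := mul_self_nonneg (z i)
  nlinarith [h i]

lemma sorted_last_max {m : ℕ} (hm : 1 ≤ m) (f : Fin m → ℝ) :
    (∃ i, f i = ((Finset.univ.val.map f).sort (· ≤ ·)).getD (m - 1) 0) ∧
      ∀ i, f i ≤ ((Finset.univ.val.map f).sort (· ≤ ·)).getD (m - 1) 0 := by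
  set L : List ℝ := (Finset.univ.val.map f).sort (· ≤ ·) with hL
  have hlen : L.length = m := by
    rw [hL, Multiset.length_sort, Multiset.card_map]
    simp
  have hlt : m - 1 < L.length := by omega
  have hgd : L.getD (m - 1) 0 = L.get ⟨m - 1, hlt⟩ := by simp [List.getD_eq_getElem?_getD, hlt]
  have hsorted : L.Pairwise (· ≤ ·) := Multiset.pairwise_sort _ _
  constructor
  · have hmem : L.getD (m - 1) 0 ∈ Multiset.map f Finset.univ.val := by
      rw [← Multiset.mem_sort (α := ℝ) (· ≤ ·), ← hL, hgd]
      exact L.get_mem _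
    obtain ⟨i, _, hi⟩ := Multiset.mem_map.mp hmem
    exact ⟨i, hi⟩
  · intro i
    have hmem : f i ∈ L := by
      rw [hL, Multiset.mem_sort]
      exact Multiset.mem_map.mpr ⟨i, by simp, rfl⟩
    obtain ⟨p, hp⟩ := List.mem_iff_get.mp hmem
    rw [hgd, ← hp]
    exact hsorted.rel_get_of_le (by simp [Fin.le_def]; omega)

lemma psd_to_vectors {I : Type*} [Fintype I] [DecidableEq I] (M : Matrix I I ℝ)
    (hM : M.PosSemidef) (d : ℕ) (hrank : M.rank ≤ d) :
    ∃ v : I → EuclideanSpace ℝ (Fin d), ∀ i j, ⟪v i, v j⟫ = M i j := by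
  have hH : M.IsHermitian := hM.1
  set μ := hH.eigenvalues with hμ
  set U : Matrix I I ℝ := (hH.eigenvectorUnitary : Matrix I I ℝ) with hUdef
  have hcard : Fintype.card {i // μ i ≠ 0} ≤ d := by
    rw [← hH.rank_eq_card_non_zero_eigs]
    exact hrank
  obtain ⟨e⟩ : Nonempty ({i // μ i ≠ 0} ↪ Fin d) :=
    Function.Embedding.nonempty_of_card_le (by simpa using hcard)
  refine ⟨fun j => WithLp.toLp 2 (fun c => ∑ i : {i // μ i ≠ 0},
      if e i = c then Real.sqrt (μ i) * U j (i : I) else 0), fun j j' => ?_⟩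
  rw [spec_entry M hH j j']
  simp only [PiLp.inner_apply, PiLp.toLp_apply, RCLike.inner_apply, conj_trivial]
  conv_lhs => arg 2; ext c; rw [mul_comm]
  have step1 : ∀ c : Fin d,
      (∑ i : {i // μ i ≠ 0}, if e i = c then Real.sqrt (μ i) * U j (i : I) else 0)
        * (∑ i : {i // μ i ≠ 0}, if e i = c then Real.sqrt (μ i) * U j' (i : I) else 0)
      = ∑ i : {i // μ i ≠ 0}, ∑ i' : {i // μ i ≠ 0},
          if e i = c then (if e i' = c then
            (Real.sqrt (μ i) * U j (i : I)) * (Real.sqrt (μ i') * U j' (i' : I)) else 0) else 0 := by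
    intro c
    rw [Finset.sum_mul_sum]
    refine Finset.sum_congr rfl fun i _ => Finset.sum_congr rfl fun i' _ => ?_
    by_cases h1 : e i = c <;> by_cases h2 : e i' = c <;> simp [h1, h2]
  calc (∑ c : Fin d, _) = ∑ i : {i // μ i ≠ 0}, μ i * U j (i : I) * U j' (i : I) := by
        simp only [step1]
        rw [Finset.sum_comm]
        refine Finset.sum_congr rfl fun i _ => ?_
        rw [Finset.sum_comm]
        have : ∀ i' : {i // μ i ≠ 0},
            (∑ c : Fin d, if e i = c then (if e i' = c then
              (Real.sqrt (μ i) * U j (i : I)) * (Real.sqrt (μ i') * U j' (i' : I)) else 0) else 0)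
            = if i' = i then (Real.sqrt (μ i) * U j (i : I)) * (Real.sqrt (μ i') * U j' (i' : I))
              else 0 := by
          intro i'
          rw [Finset.sum_ite_eq Finset.univ (e i)]
          simp only [Finset.mem_univ, if_true]
          by_cases h : i' = i
          · subst h; simp
          · have : ¬ (e i' = e i) := fun hc => h (e.injective hc)
            simp [this, h]
        simp only [this]
        rw [Finset.sum_ite_eq' Finset.univ i]
        simp only [Finset.mem_univ, if_true]
        have hnn : 0 ≤ μ (i : I) := hM.eigenvalues_nonneg _
        linear_combination (U j (i : I) * U j' (i : I)) * (Real.mul_self_sqrt hnn)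
    _ = ∑ i : I, μ i * U j i * U j' i := by
        rw [← Finset.sum_subtype (Finset.univ.filter (fun i => μ i ≠ 0))
          (by simp) (fun i => μ i * U j i * U j' i)]
        rw [← Finset.sum_filter_add_sum_filter_not Finset.univ (fun i => μ i ≠ 0)
          (fun i => μ i * U j i * U j' i)]
        have : ∑ i ∈ Finset.univ.filter (fun i => ¬ μ i ≠ 0), μ i * U j i * U j' i = 0 := by
          refine Finset.sum_eq_zero fun i hi => ?_
          simp only [Finset.mem_filter, not_not] at hi
          rw [hi.2, zero_mul, zero_mul]
        rw [this, add_zero]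

lemma equi_bdd (α : ℝ) (hα0 : 0 < α) (hα1 : α < 1) (d : ℕ) :
    BddAbove {n : ℕ | ∃ v : Fin n → EuclideanSpace ℝ (Fin d),
      (∀ i, ‖v i‖ = 1) ∧ ∀ i j, i ≠ j → ⟪v i, v j⟫ = α ∨ ⟪v i, v j⟫ = -α} := by
  refine ⟨d * d, fun n hn => ?_⟩
  obtain ⟨v, hunit, hang⟩ := hn
  set w : Fin n → EuclideanSpace ℝ (Fin d × Fin d) :=
    fun i => WithLp.toLp 2 (fun p : Fin d × Fin d => v i p.1 * v i p.2) with hw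
  have hinner : ∀ i j, ⟪w i, w j⟫ = ⟪v i, v j⟫ * ⟪v i, v j⟫ := by
    intro i j
    simp only [hw, PiLp.inner_apply, PiLp.toLp_apply, RCLike.inner_apply, conj_trivial]
    rw [Fintype.sum_prod_type, Finset.sum_mul_sum]
    exact Finset.sum_congr rfl fun a _ => Finset.sum_congr rfl fun b _ => by ring
  have hq : ∀ i j, i ≠ j → ⟪w i, w j⟫ = α ^ 2 := by
    intro i j hij
    rw [hinner i j]
    rcases hang i j hij with h | h <;> rw [h] <;> ring
  have hqd : ∀ i, ⟪w i, w i⟫ = 1 := by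
    intro i
    have h1 : ⟪v i, v i⟫ = 1 := by
      rw [real_inner_self_eq_norm_mul_norm, hunit i]; norm_num
    rw [hinner i i, h1, one_mul]
  have hli : LinearIndependent ℝ w := by
    rw [Fintype.linearIndependent_iff]
    intro g hg
    have hE : ⟪∑ i, g i • w i, ∑ j, g j • w j⟫ = 0 := by rw [hg, inner_zero_left]
    rw [sum_inner] at hE
    have hE2 : ∑ i, ∑ j, g i * g j * ⟪w i, w j⟫ = 0 := by
      rw [← hE]
      refine Finset.sum_congr rfl fun i _ => ?_
      rw [inner_sum]
      refine Finset.sum_congr rfl fun j _ => ?_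
      rw [real_inner_smul_left, real_inner_smul_right]; ring
    have hsplit : ∀ i j, g i * g j * ⟪w i, w j⟫
        = α ^ 2 * (g i * g j) + (if j = i then (1 - α ^ 2) * g i ^ 2 else 0) := by
      intro i j
      by_cases h : j = i
      · subst h; rw [hqd j, if_pos rfl]; ring
      · rw [hq i j (fun hc => h hc.symm), if_neg h]; ring
    simp only [hsplit, Finset.sum_add_distrib, Finset.sum_ite_eq' Finset.univ,
      Finset.mem_univ, if_true] at hE2
    have hsq : (∑ i, ∑ j, α ^ 2 * (g i * g j)) = α ^ 2 * (∑ i, g i) ^ 2 := by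
      have hss : (∑ i, g i) ^ 2 = ∑ i, ∑ j, g i * g j := by
        rw [sq, Finset.sum_mul_sum]
      rw [hss, Finset.mul_sum]
      exact Finset.sum_congr rfl fun i _ => by rw [Finset.mul_sum]
    rw [hsq] at hE2
    have h1 : 0 ≤ α ^ 2 * (∑ i, g i) ^ 2 := by positivity
    have h2 : ∑ i, (1 - α ^ 2) * g i ^ 2 = (1 - α ^ 2) * ∑ i, g i ^ 2 := by
      rw [Finset.mul_sum]
    rw [h2] at hE2
    have h3 : 0 < 1 - α ^ 2 := by nlinarith
    have h4 : 0 ≤ ∑ i, g i ^ 2 := Finset.sum_nonneg fun i _ => sq_nonneg _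
    have h5 : ∑ i, g i ^ 2 = 0 := by nlinarith
    intro i
    have := (Finset.sum_eq_zero_iff_of_nonneg (fun i _ => sq_nonneg (g i))).mp h5 i
      (Finset.mem_univ i)
    exact pow_eq_zero_iff (by norm_num) |>.mp this
  have := hli.fintype_card_le_finrank
  simpa [finrank_euclideanSpace] using this
set_option maxHeartbeats 1000000 in
lemma construction (α lam : ℝ) (hα0 : 0 < α) (hlam : 0 ≤ lam)
    (k t r d : ℕ) (hk2 : 2 ≤ k) (G : SimpleGraph (Fin k))
    (hmax : ∀ i, (adjMat_isHermitian G).eigenvalues i ≤ lam)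
    (hex : ∃ u : Fin k → ℝ, u ≠ 0 ∧ adjMat G *ᵥ u = lam • u)
    (hdiag : 2 * α * lam + α = 1)
    (hd : t * (k - 1) + r + 1 ≤ d) :
    ∃ v : Fin (t * k + r) → EuclideanSpace ℝ (Fin d),
      (∀ i, ‖v i‖ = 1) ∧ ∀ i j, i ≠ j → ⟪v i, v j⟫ = α ∨ ⟪v i, v j⟫ = -α := by
  classical
  set A : Matrix (Fin k) (Fin k) ℝ := adjMat G with hAdef
  have hA : A.IsHermitian := adjMat_isHermitian G
  set I := (Fin t × Fin k) ⊕ Fin r with hI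
  set B : Matrix I I ℝ := Matrix.of (fun x y =>
    match x, y with
    | Sum.inl (s, a), Sum.inl (s', a') => if s = s' then A a a' else 0
    | _, _ => 0) with hB
  set J : Matrix I I ℝ := Matrix.of (fun _ _ => (1 : ℝ)) with hJ
  set P : Matrix I I ℝ := lam • (1 : Matrix I I ℝ) - B with hP
  set M : Matrix I I ℝ := (2 * α) • P + α • J with hM
  -- entries of B
  have hB01 : ∀ p q : I, B p q = 0 ∨ B p q = 1 := by
    rintro (⟨s, a⟩ | b) (⟨s', a'⟩ | b')
    · by_cases h : s = s'
      · by_cases h2 : G.Adj a a' <;> simp [hB, h, h2, hAdef, adjMat]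
      · simp [hB, h]
    · simp [hB]
    · simp [hB]
    · simp [hB]
  have hBsymm : ∀ p q : I, B p q = B q p := by
    rintro (⟨s, a⟩ | b) (⟨s', a'⟩ | b') <;> simp only [hB, Matrix.of_apply]
    by_cases h : s = s'
    · subst h
      simp only [if_true]
      have := congrFun (congrFun hA a) a'
      simpa [Matrix.conjTranspose_apply] using this.symm
    · have h' : ¬ s' = s := fun hc => h hc.symm
      simp [h, h']
  have hBdiag : ∀ p : I, B p p = 0 := by
    rintro (⟨s, a⟩ | b) <;> simp only [hB, Matrix.of_apply]
    simp [hAdef, adjMat]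
  -- quadratic forms
  have hBquad : ∀ x : I → ℝ, x ⬝ᵥ B *ᵥ x
      = ∑ s : Fin t, (fun a => x (Sum.inl (s, a))) ⬝ᵥ A *ᵥ (fun a => x (Sum.inl (s, a))) := by
    intro x
    rw [dotProduct]
    rw [Fintype.sum_sum_type]
    have h2 : ∀ b : Fin r, x (Sum.inr b) * (B *ᵥ x) (Sum.inr b) = 0 := by
      intro b
      have : (B *ᵥ x) (Sum.inr b) = 0 := by
        rw [Matrix.mulVec, dotProduct]
        refine Finset.sum_eq_zero fun q _ => ?_
        rcases q with ⟨s', a'⟩ | b' <;> simp [hB]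
      rw [this, mul_zero]
    rw [Finset.sum_congr rfl fun b _ => h2 b, Finset.sum_const_zero, add_zero]
    rw [Fintype.sum_prod_type]
    refine Finset.sum_congr rfl fun s _ => ?_
    rw [dotProduct]
    refine Finset.sum_congr rfl fun a _ => ?_
    congr 1
    rw [Matrix.mulVec, dotProduct, Matrix.mulVec, dotProduct,
      Fintype.sum_sum_type]
    have h3 : ∀ b' : Fin r, B (Sum.inl (s, a)) (Sum.inr b') * x (Sum.inr b') = 0 := by
      intro b'; simp [hB]
    rw [Finset.sum_congr rfl fun b' _ => h3 b', Finset.sum_const_zero, add_zero,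
      Fintype.sum_prod_type]
    rw [Finset.sum_comm]
    refine Finset.sum_congr rfl fun a' _ => ?_
    have h4 : ∀ s' : Fin t, B (Sum.inl (s, a)) (Sum.inl (s', a')) * x (Sum.inl (s', a'))
        = if s = s' then A a a' * x (Sum.inl (s', a')) else 0 := by
      intro s'
      by_cases h : s = s' <;> simp [hB, h]
    rw [Finset.sum_congr rfl fun s' _ => h4 s', Finset.sum_ite_eq Finset.univ s]
    simp
  -- decomposition of x ⬝ᵥ x
  have hxx : ∀ x : I → ℝ, x ⬝ᵥ x
      = (∑ s : Fin t, (fun a => x (Sum.inl (s, a))) ⬝ᵥ (fun a => x (Sum.inl (s, a))))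
        + ∑ b : Fin r, x (Sum.inr b) * x (Sum.inr b) := by
    intro x
    rw [dotProduct, Fintype.sum_sum_type, Fintype.sum_prod_type]
    simp [dotProduct]
  -- P is psd
  have hPpsd : P.PosSemidef := by
    refine Matrix.PosSemidef.of_dotProduct_mulVec_nonneg ?_ ?_
    · show Pᴴ = P
      ext p q
      simp only [hP, Matrix.conjTranspose_apply, Matrix.sub_apply, Matrix.smul_apply,
        Matrix.one_apply, star_trivial, smul_eq_mul]
      rw [hBsymm q p]
      by_cases h : p = q
      · subst h; simp
      · have h' : ¬ q = p := fun hc => h hc.symm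
        simp [h, h']
    · intro x
      have hsx : star x = x := by
        funext p; simp
      rw [hsx, hP, Matrix.sub_mulVec, dotProduct_sub, Matrix.smul_mulVec,
        Matrix.one_mulVec, dotProduct_smul, hBquad, hxx x]
      have hray : ∀ s : Fin t, (fun a => x (Sum.inl (s, a))) ⬝ᵥ A *ᵥ (fun a => x (Sum.inl (s, a)))
          ≤ lam * ((fun a => x (Sum.inl (s, a))) ⬝ᵥ (fun a => x (Sum.inl (s, a)))) :=
        fun s => rayleigh A hA lam hmax _
      have h2 : 0 ≤ ∑ b : Fin r, x (Sum.inr b) * x (Sum.inr b) :=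
        Finset.sum_nonneg fun b _ => mul_self_nonneg _
      have h3 := Finset.sum_le_sum fun s (_ : s ∈ Finset.univ) => hray s
      rw [← Finset.mul_sum] at h3
      simp only [smul_eq_mul]
      nlinarith [mul_nonneg hlam h2]
  -- J is psd
  have hJpsd : J.PosSemidef := by
    refine Matrix.PosSemidef.of_dotProduct_mulVec_nonneg ?_ ?_
    · show Jᴴ = J
      ext p q
      simp [hJ]
    · intro x
      have hsx : star x = x := by funext p; simp
      rw [hsx]
      have : x ⬝ᵥ J *ᵥ x = (∑ p : I, x p) * (∑ p : I, x p) := by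
        rw [dotProduct, Finset.sum_mul]
        refine Finset.sum_congr rfl fun p _ => ?_
        rw [Matrix.mulVec, dotProduct]
        simp [hJ, Finset.mul_sum]
      rw [this]
      exact mul_self_nonneg _
  -- M is psd
  have hsmul_psd : ∀ (c : ℝ) (Q : Matrix I I ℝ), 0 ≤ c → Q.PosSemidef → (c • Q).PosSemidef := by
    intro c Q hc hQ
    refine Matrix.PosSemidef.of_dotProduct_mulVec_nonneg ?_ ?_
    · show (c • Q)ᴴ = c • Q
      ext p q
      have := congrFun (congrFun hQ.1 p) q
      simp only [Matrix.conjTranspose_apply, Matrix.smul_apply, star_trivial,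
        smul_eq_mul] at this ⊢
      rw [this]
    · intro x
      rw [Matrix.smul_mulVec, dotProduct_smul]
      exact smul_nonneg hc (hQ.dotProduct_mulVec_nonneg x)
  have hMpsd : M.PosSemidef :=
    (hsmul_psd (2 * α) P (by linarith) hPpsd).add (hsmul_psd α J (le_of_lt hα0) hJpsd)
  -- kernel vectors
  obtain ⟨u, hu0, huA⟩ := hex
  set y : Fin t → (I → ℝ) := fun s => fun p =>
    match p with
    | Sum.inl (s', a) => if s' = s then u a else 0
    | Sum.inr _ => 0 with hy
  have hyker : ∀ s, P.mulVecLin (y s) = 0 := by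
    intro s
    show P *ᵥ y s = 0
    funext p
    rw [hP, Matrix.sub_mulVec, Matrix.smul_mulVec, Matrix.one_mulVec]
    simp only [Pi.sub_apply, Pi.smul_apply, Pi.zero_apply, smul_eq_mul]
    rcases p with ⟨s', a⟩ | b
    · have hBy : (B *ᵥ y s) (Sum.inl (s', a)) = if s' = s then (A *ᵥ u) a else 0 := by
        rw [Matrix.mulVec, dotProduct, Fintype.sum_sum_type]
        have hinr : ∀ b' : Fin r, B (Sum.inl (s', a)) (Sum.inr b') * y s (Sum.inr b') = 0 := by
          intro b'; simp [hB, hy]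
        rw [Finset.sum_congr rfl fun b' _ => hinr b', Finset.sum_const_zero, add_zero,
          Fintype.sum_prod_type]
        have hterm : ∀ s'' : Fin t, (∑ a' : Fin k,
            B (Sum.inl (s', a)) (Sum.inl (s'', a')) * y s (Sum.inl (s'', a')))
            = if s' = s'' then (if s'' = s then ∑ a' : Fin k, A a a' * u a' else 0) else 0 := by
          intro s''
          by_cases h1 : s' = s'' <;> by_cases h2 : s'' = s <;>
            simp [hB, hy, h1, h2]
        rw [Finset.sum_congr rfl fun s'' _ => hterm s'', Finset.sum_ite_eq Finset.univ s']
        simp only [Finset.mem_univ, if_true]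
        by_cases h2 : s' = s
        · simp [h2, Matrix.mulVec, dotProduct]
        · simp [h2]
      rw [hBy]
      have hys : y s (Sum.inl (s', a)) = if s' = s then u a else 0 := rfl
      rw [hys]
      by_cases h2 : s' = s
      · have := congrFun huA a
        simp only [Pi.smul_apply, smul_eq_mul] at this
        simp [h2, this]
      · simp [h2]
    · have hBy : (B *ᵥ y s) (Sum.inr b) = 0 := by
        rw [Matrix.mulVec, dotProduct]
        refine Finset.sum_eq_zero fun q _ => ?_
        rcases q with ⟨s'', a'⟩ | b' <;> simp [hB]
      rw [hBy]
      have hys : y s (Sum.inr b) = 0 := rfl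
      rw [hys]
      simp
  obtain ⟨a₀, ha₀⟩ := Function.ne_iff.mp hu0
  have hyli : LinearIndependent ℝ y := by
    rw [Fintype.linearIndependent_iff]
    intro g hg s
    have hcf := congrFun hg (Sum.inl (s, a₀))
    simp only [Finset.sum_apply, Pi.smul_apply, smul_eq_mul, Pi.zero_apply] at hcf
    have hterm : ∀ s' : Fin t, g s' * y s' (Sum.inl (s, a₀))
        = if s = s' then g s' * u a₀ else 0 := by
      intro s'
      have hys : y s' (Sum.inl (s, a₀)) = if s = s' then u a₀ else 0 := rfl
      rw [hys]
      by_cases h : s = s' <;> simp [h]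
    rw [Finset.sum_congr rfl fun s' _ => hterm s', Finset.sum_ite_eq Finset.univ s] at hcf
    simp only [Finset.mem_univ, if_true] at hcf
    exact (mul_eq_zero.mp hcf).resolve_right ha₀
  -- rank bounds
  have hrankP : P.rank + Module.finrank ℝ (LinearMap.ker P.mulVecLin) = Fintype.card I := by
    have h := LinearMap.finrank_range_add_finrank_ker (P.mulVecLin)
    rwa [Module.finrank_pi] at h
  have htker : t ≤ Module.finrank ℝ (LinearMap.ker P.mulVecLin) := by
    have hle : Submodule.span ℝ (Set.range y) ≤ LinearMap.ker P.mulVecLin := by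
      rw [Submodule.span_le]
      rintro _ ⟨s, rfl⟩
      exact LinearMap.mem_ker.mpr (hyker s)
    have h1 : Module.finrank ℝ (Submodule.span ℝ (Set.range y)) = t := by
      rw [finrank_span_eq_card hyli, Fintype.card_fin]
    calc t = Module.finrank ℝ (Submodule.span ℝ (Set.range y)) := h1.symm
      _ ≤ _ := Submodule.finrank_mono hle
  have hrankJ : J.rank ≤ 1 := by
    have hle : LinearMap.range J.mulVecLin
        ≤ Submodule.span ℝ {((fun _ => (1:ℝ)) : I → ℝ)} := by
      rintro _ ⟨x, rfl⟩
      refine Submodule.mem_span_singleton.mpr ⟨∑ q : I, x q, ?_⟩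
      funext p
      show (∑ q : I, x q) * 1 = (J *ᵥ x) p
      rw [Matrix.mulVec, dotProduct, mul_one]
      exact Finset.sum_congr rfl fun q _ => by simp [hJ]
    have h1 : J.rank ≤ Module.finrank ℝ (Submodule.span ℝ {((fun _ => (1:ℝ)) : I → ℝ)}) :=
      Submodule.finrank_mono hle
    rcases eq_or_ne ((fun _ => (1:ℝ)) : I → ℝ) 0 with h0 | h0
    · rw [h0, Submodule.span_zero_singleton] at h1
      simpa using h1.trans (by simp)
    · rwa [finrank_span_singleton h0] at h1
  have hcardI : Fintype.card I = t * k + r := by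
    show Fintype.card ((Fin t × Fin k) ⊕ Fin r) = t * k + r
    simp
  have hrankM : M.rank ≤ d := by
    have hsub : LinearMap.range M.mulVecLin ≤
        LinearMap.range P.mulVecLin ⊔ LinearMap.range J.mulVecLin := by
      rintro w ⟨x, rfl⟩
      have hMx : M.mulVecLin x = (2*α) • P.mulVecLin x + α • J.mulVecLin x := by
        show M *ᵥ x = (2*α) • (P *ᵥ x) + α • (J *ᵥ x)
        rw [hM, Matrix.add_mulVec, Matrix.smul_mulVec, Matrix.smul_mulVec]
      rw [hMx]
      exact Submodule.add_mem _
        (Submodule.mem_sup_left (Submodule.smul_mem _ _ (LinearMap.mem_range_self _ x)))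
        (Submodule.mem_sup_right (Submodule.smul_mem _ _ (LinearMap.mem_range_self _ x)))
    have h1 : M.rank ≤ Module.finrank ℝ
        ↥(LinearMap.range P.mulVecLin ⊔ LinearMap.range J.mulVecLin) :=
      Submodule.finrank_mono hsub
    have h2 := Submodule.finrank_add_le_finrank_add_finrank
      (LinearMap.range P.mulVecLin) (LinearMap.range J.mulVecLin)
    have h3 : Module.finrank ℝ (LinearMap.range P.mulVecLin) = P.rank := rfl
    have h4 : Module.finrank ℝ (LinearMap.range J.mulVecLin) = J.rank := rfl
    rw [h3, h4] at h2
    have htk : t * k = t * (k - 1) + t := by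
      obtain ⟨k', rfl⟩ : ∃ k', k = k' + 1 := ⟨k - 1, by omega⟩
      rw [Nat.add_sub_cancel, Nat.mul_succ]
    have h5 : M.rank ≤ P.rank + J.rank := h1.trans h2
    have h6 : P.rank + t ≤ Fintype.card I := by omega
    have h7 : Fintype.card I - t + 1 ≤ d := by rw [hcardI]; omega
    omega
  -- entries of M
  have hMdiag : ∀ p : I, M p p = 1 := by
    intro p
    have : M p p = 2 * α * (lam * 1 - B p p) + α * 1 := by
      simp [hM, hP, hJ, Matrix.add_apply, Matrix.smul_apply, Matrix.sub_apply,
        Matrix.one_apply_eq, smul_eq_mul]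
    rw [this, hBdiag p]
    linarith [hdiag]
  have hMoff : ∀ p q : I, p ≠ q → M p q = α ∨ M p q = -α := by
    intro p q hpq
    have h1 : (1 : Matrix I I ℝ) p q = 0 := Matrix.one_apply_ne hpq
    have h2 : M p q = 2 * α * (lam * (1 : Matrix I I ℝ) p q - B p q) + α * 1 := by
      simp [hM, hP, hJ, Matrix.add_apply, Matrix.smul_apply, Matrix.sub_apply, smul_eq_mul]
    rcases hB01 p q with h | h
    · left; rw [h2, h1, h]; ring
    · right; rw [h2, h1, h]; ring
  -- conclude
  obtain ⟨v, hv⟩ := psd_to_vectors M hMpsd d hrankM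
  let e : Fin (t * k + r) ≃ I := (Fintype.equivFinOfCardEq hcardI).symm
  refine ⟨fun i => v (e i), fun i => ?_, fun i j hij => ?_⟩
  · have h1 : ⟪v (e i), v (e i)⟫ = 1 := by rw [hv]; exact hMdiag _
    have h2 : ‖v (e i)‖ * ‖v (e i)‖ = 1 := by rw [← real_inner_self_eq_norm_mul_norm, h1]
    nlinarith [norm_nonneg (v (e i))]
  · have hne : e i ≠ e j := fun hc => hij (e.injective hc)
    rw [hv]
    exact hMoff _ _ hne

/-- **Lower bound construction.** Let `0 < α < 1`, `λ = (1−α)/(2α)`, and suppose some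
finite simple graph has largest adjacency eigenvalue exactly `λ`, with `k` the minimum
number of vertices of such a graph (the spectral radius order of `λ`). Then for every
`d ≥ 2`, `N_α(d) ≥ ⌊k(d−1)/(k−1)⌋`. -/
theorem equiangular_lines_lower_bound (α : ℝ) (hα0 : 0 < α) (hα1 : α < 1)
    (hne : {m : ℕ | ∃ G : SimpleGraph (Fin m),
      graphEigNth G 1 = (1 - α) / (2 * α)}.Nonempty)
    (k : ℕ)
    (hk : k = sInf {m : ℕ | ∃ G : SimpleGraph (Fin m),
      graphEigNth G 1 = (1 - α) / (2 * α)}) :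
    ∀ d : ℕ, 2 ≤ d → k * (d - 1) / (k - 1) ≤ maxEquiangularLines α d := by
  intro d hd
  set lam : ℝ := (1 - α) / (2 * α) with hlamdef
  have hlam_pos : 0 < lam := div_pos (by linarith) (by linarith)
  have hkS : k ∈ {m : ℕ | ∃ G : SimpleGraph (Fin m), graphEigNth G 1 = lam} := by
    rw [hk]; exact Nat.sInf_mem hne
  obtain ⟨G, hG⟩ := hkS
  -- k ≥ 1
  have hk1 : 1 ≤ k := by
    by_contra h
    have hk0 : k = 0 := by omega
    subst hk0
    have h0 : graphEigNth G 1 = 0 := by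
      simp [graphEigNth]
    rw [h0] at hG
    exact absurd hG.symm (ne_of_gt hlam_pos)
  set hA := adjMat_isHermitian G with hAdef
  -- the top eigenvalue is lam
  have hunfold : graphEigNth G 1
      = ((Finset.univ.val.map hA.eigenvalues).sort (· ≤ ·)).getD (k - 1) 0 := by
    unfold graphEigNth
    rw [Fintype.card_fin]
    rfl
  obtain ⟨⟨i₀, hi₀⟩, hmax⟩ := sorted_last_max hk1 hA.eigenvalues
  rw [← hunfold, hG] at hi₀
  have hmax' : ∀ i, hA.eigenvalues i ≤ lam := by
    intro i
    have := hmax i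
    rwa [← hunfold, hG] at this
  -- eigenvector for lam
  set u : Fin k → ℝ := ⇑(hA.eigenvectorBasis i₀) with hu
  have hu0 : u ≠ 0 := by
    intro h
    refine hA.eigenvectorBasis.orthonormal.ne_zero i₀ ?_
    ext a
    exact congrFun h a
  have huA : adjMat G *ᵥ u = lam • u := by
    have := hA.mulVec_eigenvectorBasis i₀
    rwa [hi₀] at this
  -- k ≥ 2
  have hk2 : 2 ≤ k := by
    by_contra h
    have hk1' : k = 1 := by omega
    subst hk1'
    have hA0 : adjMat G = 0 := by
      ext a b
      have hab : a = b := Subsingleton.elim a b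
      subst hab
      simp [adjMat]
    rw [hA0, Matrix.zero_mulVec] at huA
    rcases smul_eq_zero.mp huA.symm with h1 | h1
    · exact absurd h1 (ne_of_gt hlam_pos)
    · exact hu0 h1
  -- arithmetic setup
  set t : ℕ := (d - 1) / (k - 1) with ht
  set r : ℕ := (d - 1) % (k - 1) with hr
  have hk1pos : 0 < k - 1 := by omega
  have hdm : (k - 1) * t + r = d - 1 := Nat.div_add_mod (d - 1) (k - 1)
  have hrlt : r < k - 1 := Nat.mod_lt _ hk1pos
  have hdle : t * (k - 1) + r + 1 ≤ d := by
    have : t * (k - 1) = (k - 1) * t := Nat.mul_comm _ _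
    omega
  have hdiag : 2 * α * lam + α = 1 := by
    rw [hlamdef]
    field_simp
    ring
  obtain ⟨v, hvnorm, hvang⟩ := construction α lam hα0 (le_of_lt hlam_pos) k t r d hk2 G
    hmax' ⟨u, hu0, huA⟩ hdiag hdle
  have hmem : t * k + r ∈ {n : ℕ | ∃ v : Fin n → EuclideanSpace ℝ (Fin d),
      (∀ i, ‖v i‖ = 1) ∧ ∀ i j, i ≠ j → ⟪v i, v j⟫ = α ∨ ⟪v i, v j⟫ = -α} :=
    ⟨v, hvnorm, hvang⟩
  have hle : t * k + r ≤ maxEquiangularLines α d :=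
    le_csSup (equi_bdd α hα0 hα1 d) hmem
  -- k * (d-1) / (k-1) = t * k + r
  have harith : k * (d - 1) / (k - 1) = t * k + r := by
    obtain ⟨k', hk'⟩ : ∃ k', k = k' + 1 + 1 := ⟨k - 2, by omega⟩
    have hmul : k * (d - 1) = (k - 1) * (t * k + r) + r := by
      have h1 : d - 1 = (k - 1) * t + r := hdm.symm
      rw [h1, hk']
      simp only [Nat.add_sub_cancel]
      ring
    rw [hmul, Nat.mul_add_div hk1pos, Nat.div_eq_of_lt hrlt, add_zero]
  rw [harith]
  exact hle
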